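/- Let k ≥ 2 and fix complex numbers λ_{ij}, μ_{ij} ((i,j) ∈ P). Define Λ : ℂ^k → ℂ by Λ(u_1,…,u_k) = ϑ( (λ_{ij}·(a_{ij} − u_i))_{(i,j)∈P}, (μ_{ij}·(a_{ij} − u_j))_{(i,j)∈P} ). Then for each l ∈ {1,…,k}, with the other variables held fixed, the function u_l ↦ Λ(u_1,…,u_k) is a polynomial function of u_l of degree at most k−1. -/
import Mathlib


namespace ReducibleSpectral

noncomputable section

/-- The row index `(i, t)` (with `t : Fin (k-1)`) corresponds to the pair `(i, j) ∈ P`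
(where `P = {(i,j) : i ≠ j}`), with `j` the `t`-th element of `{0,…,k-1} \ {i}`;
this identification is order-preserving for the lexicographic orders. -/
def colToRow (k : ℕ) (i : Fin k) (t : Fin (k - 1)) : Fin k :=
  if (t : ℕ) < (i : ℕ) then ⟨t, by have := t.isLt; omega⟩
  else ⟨(t : ℕ) + 1, by have := t.isLt; have := i.isLt; omega⟩

/-- The matrix `Ξ(λ,μ)`: rows indexed by `P = {(i,j) : i ≠ j}` (in lexicographic order,
encoded via `colToRow`), columns indexed by pairs `(m,n)`, `m ∈ {1,…,k}`, `n ∈ {0,…,k-2}`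
(lexicographic); the entry at row `(i,j)`, column `(m,n)` is `λ_{ij}·a_{ij}^n` if `m = i`,
`μ_{ij}·a_{ij}^n` if `m = j`, and `0` otherwise. -/
def Xi (k : ℕ) (a lam mu : Fin k → Fin k → ℂ) :
    Matrix (Fin k × Fin (k - 1)) (Fin k × Fin (k - 1)) ℂ :=
  fun p q =>
    if q.1 = p.1 then lam p.1 (colToRow k p.1 p.2) * a p.1 (colToRow k p.1 p.2) ^ (q.2 : ℕ)
    else if q.1 = colToRow k p.1 p.2 then
      mu p.1 (colToRow k p.1 p.2) * a p.1 (colToRow k p.1 p.2) ^ (q.2 : ℕ)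
    else 0

/-- The extended theta function `ϑ(λ,μ) = det Ξ(λ,μ)`. -/
def theta (k : ℕ) (a lam mu : Fin k → Fin k → ℂ) : ℂ := (Xi k a lam mu).det

/-- The index set `P = {(i,j) : i,j ∈ {1,…,k}, i ≠ j}` as a finset. -/
def Pfin (k : ℕ) : Finset (Fin k × Fin k) :=
  Finset.univ.filter fun p => p.1 ≠ p.2

/-- For `L ⊆ P`, the set `L_i = {(i,j) ∈ L} ∪ {(m,i) ∈ P : (m,i) ∉ L}`. -/
def Lset (k : ℕ) (L : Finset (Fin k × Fin k)) (i : Fin k) : Finset (Fin k × Fin k) :=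
  (L.filter fun p => p.1 = i) ∪ ((Pfin k \ L).filter fun p => p.2 = i)

/-- `L ⊆ P` is regular iff every `L_i` has cardinality `k - 1`. -/
def IsRegular (k : ℕ) (L : Finset (Fin k × Fin k)) : Prop :=
  ∀ i : Fin k, (Lset k L i).card = k - 1


/-- The function `Λ(u_1,…,u_k) = ϑ((λ_{ij}·(a_{ij} − u_i)), (μ_{ij}·(a_{ij} − u_j)))`. -/
def LambdaFun (k : ℕ) (a lam mu : Fin k → Fin k → ℂ) (u : Fin k → ℂ) : ℂ :=
  theta k a (fun i j => lam i j * (a i j - u i)) (fun i j => mu i j * (a i j - u j))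

lemma degree_det_le_of_degree_le {n : Type*} [DecidableEq n] [Fintype n]
    (M : Matrix n n (Polynomial ℂ)) (d : n → ℕ)
    (h : ∀ p q, (M p q).degree ≤ (d q : WithBot ℕ)) :
    M.det.degree ≤ ((∑ q, d q : ℕ) : WithBot ℕ) := by
  rw [Matrix.det_apply']
  refine (Polynomial.degree_sum_le _ _).trans (Finset.sup_le fun σ _ => ?_)
  refine le_trans (Polynomial.degree_mul_le _ _) ?_
  have h1 : (((Equiv.Perm.sign σ : ℤ) : Polynomial ℂ)).degree ≤ 0 :=
    Polynomial.degree_intCast_le _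
  refine le_trans (add_le_add h1 (Polynomial.degree_prod_le _ _)) ?_
  rw [zero_add, Nat.cast_sum]
  exact Finset.sum_le_sum fun i _ => h _ i

/-- in each variable `u_l` separately (the other variables held fixed),
`Λ` is a polynomial function of degree at most `k − 1`. -/
theorem LambdaFun_polynomial_in_each_variable (k : ℕ) (hk : 2 ≤ k)
    (a lam mu : Fin k → Fin k → ℂ) (l : Fin k) (u : Fin k → ℂ) :
    ∃ Q : Polynomial ℂ, Q.degree ≤ (k - 1 : ℕ) ∧
      ∀ w : ℂ, LambdaFun k a lam mu (Function.update u l w) = Q.eval w := by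
  classical
  obtain ⟨uP, huP⟩ : ∃ uP : Fin k → Polynomial ℂ,
      uP = fun i => if i = l then Polynomial.X else Polynomial.C (u i) := ⟨_, rfl⟩
  have hMex : ∃ M : Matrix (Fin k × Fin (k - 1)) (Fin k × Fin (k - 1)) (Polynomial ℂ),
      ∀ p q, M p q =
        if q.1 = p.1 then
          Polynomial.C (lam p.1 (colToRow k p.1 p.2)) *
            (Polynomial.C (a p.1 (colToRow k p.1 p.2)) - uP p.1) *
            Polynomial.C (a p.1 (colToRow k p.1 p.2)) ^ (q.2 : ℕ)
        else if q.1 = colToRow k p.1 p.2 then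
          Polynomial.C (mu p.1 (colToRow k p.1 p.2)) *
            (Polynomial.C (a p.1 (colToRow k p.1 p.2)) - uP (colToRow k p.1 p.2)) *
            Polynomial.C (a p.1 (colToRow k p.1 p.2)) ^ (q.2 : ℕ)
        else 0 := ⟨_, fun _ _ => rfl⟩
  obtain ⟨M, hM⟩ := hMex
  have hfac : ∀ (c : ℂ) (i : Fin k),
      (Polynomial.C c - uP i).degree ≤ ((if i = l then 1 else 0 : ℕ) : WithBot ℕ) := by
    intro c i
    by_cases h : i = l
    · have h' : uP i = Polynomial.X := by rw [huP]; simp [h]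
      rw [h', if_pos h, Nat.cast_one]
      refine (Polynomial.degree_sub_le _ _).trans (max_le ?_ ?_)
      · exact Polynomial.degree_C_le.trans (by norm_num)
      · exact le_of_eq Polynomial.degree_X
    · have h' : uP i = Polynomial.C (u i) := by rw [huP]; simp [h]
      rw [h', if_neg h, Nat.cast_zero]
      exact (Polynomial.degree_sub_le _ _).trans
        (max_le Polynomial.degree_C_le Polynomial.degree_C_le)
  have hterm : ∀ (c d : ℂ) (i : Fin k) (n : ℕ),
      (Polynomial.C c * (Polynomial.C d - uP i) * Polynomial.C d ^ n).degree
        ≤ ((if i = l then 1 else 0 : ℕ) : WithBot ℕ) := by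
    intro c d i n
    have h1 : (Polynomial.C c * (Polynomial.C d - uP i)).degree
        ≤ ((if i = l then 1 else 0 : ℕ) : WithBot ℕ) := by
      refine (Polynomial.degree_mul_le _ _).trans ?_
      calc (Polynomial.C c).degree + (Polynomial.C d - uP i).degree
          ≤ 0 + ((if i = l then 1 else 0 : ℕ) : WithBot ℕ) :=
            add_le_add Polynomial.degree_C_le (hfac d i)
        _ = _ := zero_add _
    have h2 : (Polynomial.C d ^ n).degree ≤ 0 := by
      rw [← Polynomial.C_pow]; exact Polynomial.degree_C_le
    refine (Polynomial.degree_mul_le _ _).trans ?_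
    calc (Polynomial.C c * (Polynomial.C d - uP i)).degree + (Polynomial.C d ^ n).degree
        ≤ ((if i = l then 1 else 0 : ℕ) : WithBot ℕ) + 0 := add_le_add h1 h2
      _ = _ := add_zero _
  have hentry : ∀ p q, (M p q).degree ≤ (((fun q : Fin k × Fin (k - 1) =>
      if q.1 = l then 1 else 0) q : ℕ) : WithBot ℕ) := by
    intro p q
    rw [hM p q]
    dsimp only
    by_cases h1 : q.1 = p.1
    · rw [if_pos h1, h1]; exact hterm _ _ _ _
    · rw [if_neg h1]
      by_cases h2 : q.1 = colToRow k p.1 p.2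
      · rw [if_pos h2, h2]; exact hterm _ _ _ _
      · rw [if_neg h2, Polynomial.degree_zero]; exact bot_le
  refine ⟨M.det, ?_, ?_⟩
  · refine (degree_det_le_of_degree_le M _ hentry).trans (le_of_eq ?_)
    congr 1
    rw [Fintype.sum_prod_type]
    simp [Finset.sum_ite_eq', Finset.card_univ, apply_ite Finset.card]
  · intro w
    have huPe : ∀ i : Fin k, Polynomial.eval w (uP i) = Function.update u l w i := by
      intro i
      rw [huP, Function.update_apply]
      by_cases h : i = l <;> simp [h]
    have hev : (M.map (Polynomial.evalRingHom w)) =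
        Xi k a (fun i j => lam i j * (a i j - Function.update u l w i))
          (fun i j => mu i j * (a i j - Function.update u l w j)) := by
      ext p q
      simp only [Matrix.map_apply, hM p q, Xi, Polynomial.coe_evalRingHom]
      by_cases h1 : q.1 = p.1
      · rw [if_pos h1, if_pos h1]
        simp [huPe]
      · rw [if_neg h1, if_neg h1]
        by_cases h2 : q.1 = colToRow k p.1 p.2
        · rw [if_pos h2, if_pos h2]
          simp [huPe]
        · rw [if_neg h2, if_neg h2]
          simp
    calc LambdaFun k a lam mu (Function.update u l w)
        = (Xi k a (fun i j => lam i j * (a i j - Function.update u l w i))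
            (fun i j => mu i j * (a i j - Function.update u l w j))).det := by
          simp only [LambdaFun, theta]
      _ = (M.map (Polynomial.evalRingHom w)).det := by rw [hev]
      _ = Polynomial.eval w M.det := ((Polynomial.evalRingHom w).map_det M).symm

end

end ReducibleSpectral
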